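/- Let H be a hyperbolic group with finite generating set A and word metric d_A, and let φ : H → H be an endomorphism. If there exists q₀ ≥ 0 such that for all u, v ∈ H, (u|v) = 0 implies (φ(u)|φ(v)) ≤ q₀, then the BRP holds for φ: for every p ≥ 0 there exists q ≥ 0 such that for all u, v ∈ H, (u|v) ≤ p implies (φ(u)|φ(v)) ≤ q. -/

import Mathlib

namespace Paper

variable {H : Type*} [Group H]

/-- `g` can be written as a product of `n` elements of `A ∪ A⁻¹`. -/
def WordWitness (A : Set H) (g : H) (n : ℕ) : Prop :=
  ∃ l : List H, l.length = n ∧ (∀ x ∈ l, x ∈ A ∨ x⁻¹ ∈ A) ∧ l.prod = g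

/-- The word metric on `H` with respect to the generating set `A`. -/
noncomputable def wd (A : Set H) (g h : H) : ℕ :=
  sInf {n | WordWitness A (g⁻¹ * h) n}

/-- The Gromov product `(u|v)_w` with respect to the word metric for `A`. -/
noncomputable def gp (A : Set H) (w u v : H) : ℝ :=
  ((wd A w u : ℝ) + (wd A w v : ℝ) - (wd A u v : ℝ)) / 2

/-- A discrete geodesic `γ : {0,…,n} → H` from `x` to `y` for the word metric of `A`. -/
def IsDiscreteGeodesic (A : Set H) (n : ℕ) (γ : ℕ → H) (x y : H) : Prop :=
  γ 0 = x ∧ γ n = y ∧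
    ∀ i, i ≤ n → ∀ j, j ≤ n → (wd A (γ i) (γ j) : ℤ) = |(i : ℤ) - (j : ℤ)|

/-- `H` is hyperbolic with respect to `A`: some `δ ≥ 0` satisfies the Rips thin-triangles
condition for discrete geodesics (all three sides are covered since `x, y, z` and the three
geodesics are universally quantified, and hence may be cyclically permuted). -/
def IsHyperbolic (A : Set H) : Prop :=
  ∃ δ : ℝ, 0 ≤ δ ∧ ∀ x y z : H, ∀ n₁ n₂ n₃ : ℕ, ∀ α β γ : ℕ → H,
    IsDiscreteGeodesic A n₁ α x y → IsDiscreteGeodesic A n₂ β y z →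
    IsDiscreteGeodesic A n₃ γ z x → ∀ i, i ≤ n₁ →
      ∃ j, (j ≤ n₂ ∧ (wd A (α i) (β j) : ℝ) ≤ δ) ∨
           (j ≤ n₃ ∧ (wd A (α i) (γ j) : ℝ) ≤ δ)

/-- The bounded reduction property for `φ`, in its Gromov-product formulation:
for every `p ≥ 0` there is `q ≥ 0` such that `(u|v) ≤ p` implies `(φ(u)|φ(v)) ≤ q`. -/
def BRP (A : Set H) (φ : H →* H) : Prop :=
  ∀ p : ℝ, 0 ≤ p → ∃ q : ℝ, 0 ≤ q ∧
    ∀ u v : H, gp A 1 u v ≤ p → gp A 1 (φ u) (φ v) ≤ q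

section Aux

variable {A : Set H}

lemma ww_inv {g : H} {n : ℕ} (h : WordWitness A g n) : WordWitness A g⁻¹ n := by
  obtain ⟨l, hl, hmem, hprod⟩ := h
  refine ⟨(l.map fun x => x⁻¹).reverse, by simp [hl], ?_,
    by rw [← hprod, List.prod_inv_reverse]⟩
  intro x hx
  simp only [List.mem_reverse, List.mem_map] at hx
  obtain ⟨a, ha, rfl⟩ := hx
  rcases hmem a ha with h' | h'
  · exact Or.inr (by simpa using h')
  · exact Or.inl h'

lemma ww_mul {g h : H} {m n : ℕ} (hg : WordWitness A g m) (hh : WordWitness A h n) :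
    WordWitness A (g * h) (m + n) := by
  obtain ⟨l₁, h1, m1, p1⟩ := hg
  obtain ⟨l₂, h2, m2, p2⟩ := hh
  refine ⟨l₁ ++ l₂, by simp [h1, h2], ?_, by simp [p1, p2]⟩
  intro x hx
  rcases List.mem_append.mp hx with h | h
  exacts [m1 x h, m2 x h]

lemma ww_exists (hgen : Subgroup.closure A = ⊤) (g : H) : ∃ n, WordWitness A g n := by
  have hg : g ∈ (Subgroup.closure A).toSubmonoid := by rw [hgen]; trivial
  rw [Subgroup.closure_toSubmonoid] at hg
  obtain ⟨l, hmem, hprod⟩ := Submonoid.exists_list_of_mem_closure hg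
  refine ⟨l.length, l, rfl, ?_, hprod⟩
  intro x hx
  rcases hmem x hx with h | h
  · exact Or.inl h
  · exact Or.inr (by simpa using h)

lemma wd_le {g h : H} {n : ℕ} (hw : WordWitness A (g⁻¹ * h) n) : wd A g h ≤ n :=
  Nat.sInf_le hw

lemma wd_witness (hgen : Subgroup.closure A = ⊤) (g h : H) :
    WordWitness A (g⁻¹ * h) (wd A g h) :=
  Nat.sInf_mem (let ⟨n, hn⟩ := ww_exists hgen (g⁻¹ * h); ⟨n, hn⟩)

lemma wd_self (g : H) : wd A g g = 0 :=
  Nat.le_zero.mp (wd_le ⟨[], rfl, by simp, by simp⟩)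

lemma wd_symm (g h : H) : wd A g h = wd A h g := by
  unfold wd
  congr 1
  ext n
  constructor
  · intro hw
    have := ww_inv (A := A) hw
    simpa [mul_inv_rev] using this
  · intro hw
    have := ww_inv (A := A) hw
    simpa [mul_inv_rev] using this

lemma wd_triangle (hgen : Subgroup.closure A = ⊤) (g h k : H) :
    wd A g k ≤ wd A g h + wd A h k := by
  have := ww_mul (wd_witness hgen g h) (wd_witness hgen h k)
  exact wd_le (by simpa [mul_assoc] using this)

lemma wd_left (a g h : H) : wd A (a * g) (a * h) = wd A g h := by
  have key : (a * g)⁻¹ * (a * h) = g⁻¹ * h := by group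
  unfold wd
  rw [key]

lemma wd_one_inv (g : H) : wd A 1 g⁻¹ = wd A 1 g := by
  rw [wd_symm]
  have := wd_left (A := A) g g⁻¹ 1
  simpa using this.symm

lemma exists_geodesic (hgen : Subgroup.closure A = ⊤) (u v : H) :
    ∃ γ : ℕ → H, IsDiscreteGeodesic A (wd A u v) γ u v := by
  obtain ⟨l, hlen, hmem, hprod⟩ := wd_witness hgen u v
  set n := wd A u v with hn
  have htake : l.take n = l := by rw [← hlen]; exact List.take_length
  refine ⟨fun i => u * (l.take i).prod, by simp, by simp [htake, hprod], ?_⟩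
  have upper : ∀ i j : ℕ, i ≤ j → j ≤ n →
      wd A (u * (l.take i).prod) (u * (l.take j).prod) ≤ j - i := by
    intro i j hij hj
    have hsplit : l.take j = l.take i ++ (l.drop i).take (j - i) := by
      rw [← List.take_add]; congr 1; omega
    have key : (u * (l.take i).prod)⁻¹ * (u * (l.take j).prod)
        = ((l.drop i).take (j - i)).prod := by
      rw [hsplit, List.prod_append]; group
    refine wd_le ⟨(l.drop i).take (j - i), ?_, ?_, key.symm⟩
    · rw [List.length_take, List.length_drop, hlen]; omega
    · intro x hx
      exact hmem x (List.mem_of_mem_drop (List.mem_of_mem_take hx))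
  have hd : ∀ i j : ℕ, i ≤ j → j ≤ n →
      wd A (u * (l.take i).prod) (u * (l.take j).prod) = j - i := by
    intro i j hij hj
    have h1 := upper i j hij hj
    have h2 : wd A u (u * (l.take i).prod) ≤ i := by
      have := upper 0 i (Nat.zero_le i) (hij.trans hj)
      simpa using this
    have h3 : wd A (u * (l.take j).prod) v ≤ n - j := by
      have := upper j n hj le_rfl
      rw [htake, hprod] at this
      simpa using this
    have hlow : n ≤ wd A u (u * (l.take i).prod)
        + wd A (u * (l.take i).prod) (u * (l.take j).prod)
        + wd A (u * (l.take j).prod) v := by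
      calc n = wd A u v := hn
        _ ≤ wd A u (u * (l.take j).prod) + wd A (u * (l.take j).prod) v :=
          wd_triangle hgen _ _ _
        _ ≤ wd A u (u * (l.take i).prod)
            + wd A (u * (l.take i).prod) (u * (l.take j).prod)
            + wd A (u * (l.take j).prod) v := by
          have := wd_triangle hgen u (u * (l.take i).prod) (u * (l.take j).prod)
          omega
    omega
  intro i hi j hj
  rcases le_total i j with hij | hij
  · have := hd i j hij hj
    rw [this, abs_sub_comm, abs_of_nonneg (by exact_mod_cast sub_nonneg.mpr (by exact_mod_cast hij : (i:ℤ) ≤ j))]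
    push_cast [hij]
    ring
  · have := hd j i hij hi
    rw [wd_symm] at this
    rw [this, abs_of_nonneg (sub_nonneg.mpr (by exact_mod_cast hij : (j:ℤ) ≤ i))]
    push_cast [hij]
    ring

lemma wd_one_mul_le (hgen : Subgroup.closure A = ⊤) (g h : H) :
    wd A 1 (g * h) ≤ wd A 1 g + wd A 1 h := by
  have h1 := wd_triangle hgen 1 g (g * h)
  have h2 : wd A g (g * h) = wd A 1 h := by
    simpa using wd_left (A := A) g 1 h
  omega

lemma wd_prod_le (hgen : Subgroup.closure A = ⊤) (M : ℕ) :
    ∀ l : List H, (∀ x ∈ l, wd A 1 x ≤ M) → wd A 1 l.prod ≤ M * l.length := by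
  intro l
  induction l with
  | nil => intro _; simp [wd_self]
  | cons x l ih =>
    intro hl
    have h1 := hl x (by simp)
    have h2 := ih (fun y hy => hl y (by simp [hy]))
    have h3 := wd_one_mul_le hgen x l.prod
    have h4 : M * (l.length + 1) = M * l.length + M := by ring
    simp only [List.prod_cons, List.length_cons]
    omega

lemma wd_phi_le (hgen : Subgroup.closure A = ⊤) (φ : H →* H) (M : ℕ)
    (hM : ∀ x : H, (x ∈ A ∨ x⁻¹ ∈ A) → wd A 1 (φ x) ≤ M) (g : H) :
    wd A 1 (φ g) ≤ M * wd A 1 g := by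
  obtain ⟨l, hlen, hmem, hprod⟩ := wd_witness hgen 1 g
  have hg : l.prod = g := by simpa using hprod
  have hφ : φ g = (l.map φ).prod := by rw [← hg, map_list_prod]
  rw [hφ]
  have := wd_prod_le hgen M (l.map φ) ?_
  · simpa [hlen] using this
  · intro y hy
    obtain ⟨x, hx, rfl⟩ := List.mem_map.mp hy
    exact hM x (hmem x hx)

lemma gp_left (a u v : H) : gp A 1 (a⁻¹ * u) (a⁻¹ * v) = gp A a u v := by
  have h1 : wd A 1 (a⁻¹ * u) = wd A a u := by
    have := wd_left (A := A) a 1 (a⁻¹ * u)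
    simpa using this.symm
  have h2 : wd A 1 (a⁻¹ * v) = wd A a v := by
    have := wd_left (A := A) a 1 (a⁻¹ * v)
    simpa using this.symm
  have h3 : wd A (a⁻¹ * u) (a⁻¹ * v) = wd A u v := wd_left a⁻¹ u v
  unfold gp
  rw [h1, h2, h3]

lemma gp_base (hgen : Subgroup.closure A = ⊤) (w u v : H) :
    gp A 1 u v ≤ gp A w u v + wd A 1 w := by
  have h1 : (wd A 1 u : ℝ) ≤ wd A 1 w + wd A w u := by
    exact_mod_cast wd_triangle hgen 1 w u
  have h2 : (wd A 1 v : ℝ) ≤ wd A 1 w + wd A w v := by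
    exact_mod_cast wd_triangle hgen 1 w v
  unfold gp
  linarith

lemma dist_geo {n : ℕ} {γ : ℕ → H} {x y : H} (hg : IsDiscreteGeodesic A n γ x y)
    {i j : ℕ} (hij : i ≤ j) (hj : j ≤ n) : (wd A (γ i) (γ j) : ℝ) = (j : ℝ) - i := by
  have h := hg.2.2 i (hij.trans hj) j hj
  rw [abs_sub_comm, abs_of_nonneg (sub_nonneg.mpr (by exact_mod_cast hij : (i:ℤ) ≤ j))] at h
  exact_mod_cast h

end Aux

/-- If the BRP holds for `φ` for `p = 0`, then it holds for every `p`. -/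
theorem brp_of_brp_zero
    (A : Set H) (hA : A.Finite) (hgen : Subgroup.closure A = ⊤)
    (hhyp : IsHyperbolic A) (φ : H →* H)
    (h0 : ∃ q₀ : ℝ, 0 ≤ q₀ ∧ ∀ u v : H, gp A 1 u v = 0 → gp A 1 (φ u) (φ v) ≤ q₀) :
    BRP A φ := by
  classical
  obtain ⟨q₀, hq₀, hq⟩ := h0
  obtain ⟨δ, hδ, hthin⟩ := hhyp
  intro p hp
  set M : ℕ := hA.toFinset.sup (fun a => wd A 1 (φ a)) with hMdef
  have hMbound : ∀ x : H, (x ∈ A ∨ x⁻¹ ∈ A) → wd A 1 (φ x) ≤ M := by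
    intro x hx
    rcases hx with hx | hx
    · exact Finset.le_sup (f := fun a => wd A 1 (φ a)) (hA.mem_toFinset.mpr hx)
    · have heq : wd A 1 (φ x) = wd A 1 (φ x⁻¹) := by rw [map_inv, wd_one_inv]
      rw [heq]
      exact Finset.le_sup (f := fun a => wd A 1 (φ a)) (hA.mem_toFinset.mpr hx)
  refine ⟨q₀ + M * (p + 2 * δ + 1), by positivity, ?_⟩
  intro u v huv
  obtain ⟨α, hα⟩ := exists_geodesic hgen u v
  obtain ⟨β, hβ⟩ := exists_geodesic hgen v (1 : H)
  obtain ⟨γg, hγ⟩ := exists_geodesic hgen (1 : H) u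
  have thin := hthin u v 1 (wd A u v) (wd A v 1) (wd A 1 u) α β γg hα hβ hγ
  set P : ℕ → Prop := fun i => ∃ j, j ≤ wd A 1 u ∧ (wd A (α i) (γg j) : ℝ) ≤ δ with hPdef
  have hP0 : P 0 := by
    refine ⟨wd A 1 u, le_rfl, ?_⟩
    rw [hα.1, hγ.2.1, wd_self]
    simpa using hδ
  set i₀ := Nat.findGreatest P (wd A u v) with hi₀def
  have hi₀n : i₀ ≤ wd A u v := Nat.findGreatest_le (wd A u v)
  have hPi₀ : P i₀ := Nat.findGreatest_spec (Nat.zero_le _) hP0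
  set w := α i₀ with hwdef
  -- Fact A : (wd 1 w) ≤ n₃ - i₀ + 2δ
  have factA : (wd A 1 w : ℝ) ≤ (wd A 1 u : ℝ) - i₀ + 2 * δ := by
    obtain ⟨j, hjn, hjd⟩ := hPi₀
    have e1 : (wd A 1 (γg j) : ℝ) = j := by
      have := dist_geo hγ (Nat.zero_le j) hjn
      rw [hγ.1] at this
      simpa using this
    have e2 : (wd A (γg j) u : ℝ) = (wd A 1 u : ℝ) - j := by
      have := dist_geo hγ hjn le_rfl
      rw [hγ.2.1] at this
      exact this
    have e3 : (wd A u w : ℝ) = i₀ := by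
      have := dist_geo hα (Nat.zero_le i₀) hi₀n
      rw [hα.1] at this
      simpa using this
    have s1 : (wd A (γg j) w : ℝ) ≤ δ := by
      rw [wd_symm]
      exact hjd
    have t1 : (wd A 1 w : ℝ) ≤ (wd A 1 (γg j) : ℝ) + (wd A (γg j) w : ℝ) := by
      exact_mod_cast wd_triangle hgen 1 (γg j) w
    have t2 : (wd A u w : ℝ) ≤ (wd A u (γg j) : ℝ) + (wd A (γg j) w : ℝ) := by
      exact_mod_cast wd_triangle hgen u (γg j) w
    have e2' : (wd A u (γg j) : ℝ) = (wd A 1 u : ℝ) - j := by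
      rw [wd_symm]; exact e2
    linarith
  -- Fact B : (wd 1 w) ≤ n₂ - (n - i₀) + 2δ + 2
  have factB : (wd A 1 w : ℝ) ≤ (wd A v 1 : ℝ) - (wd A u v : ℝ) + i₀ + 2 * δ + 2 := by
    by_cases hcase : i₀ = wd A u v
    · have : (wd A 1 w : ℝ) = (wd A v 1 : ℝ) := by
        rw [hwdef, hcase, hα.2.1, wd_symm]
      rw [this, hcase]
      linarith
    · have hlt : i₀ < wd A u v := lt_of_le_of_ne hi₀n hcase
      have hnP : ¬ P (i₀ + 1) := Nat.findGreatest_is_greatest (Nat.lt_succ_self i₀) hlt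
      obtain ⟨j, hj⟩ := thin (i₀ + 1) hlt
      rcases hj with ⟨hjn, hjd⟩ | ⟨hjn, hjd⟩
      · have e4 : (wd A (β j) 1 : ℝ) = (wd A v 1 : ℝ) - j := by
          have := dist_geo hβ hjn le_rfl
          rw [hβ.2.1] at this
          exact this
        have e5 : (wd A v (β j) : ℝ) = j := by
          have := dist_geo hβ (Nat.zero_le j) hjn
          rw [hβ.1] at this
          simpa using this
        have e6 : (wd A (α (i₀ + 1)) v : ℝ) = (wd A u v : ℝ) - (i₀ + 1) := by
          have := dist_geo hα hlt le_rfl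
          rw [hα.2.1] at this
          push_cast at this ⊢
          linarith
        have e7 : (wd A w (α (i₀ + 1)) : ℝ) = 1 := by
          have := dist_geo hα (Nat.le_succ i₀) hlt
          push_cast at this
          simpa using this
        have t1 : (wd A 1 w : ℝ) ≤ (wd A 1 (α (i₀ + 1)) : ℝ) + (wd A (α (i₀ + 1)) w : ℝ) := by
          exact_mod_cast wd_triangle hgen 1 (α (i₀ + 1)) w
        have t2 : (wd A 1 (α (i₀ + 1)) : ℝ) ≤ (wd A 1 (β j) : ℝ) + (wd A (β j) (α (i₀ + 1)) : ℝ) := by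
          exact_mod_cast wd_triangle hgen 1 (β j) (α (i₀ + 1))
        have t3 : (wd A (α (i₀ + 1)) v : ℝ) ≤ (wd A (α (i₀ + 1)) (β j) : ℝ) + (wd A (β j) v : ℝ) := by
          exact_mod_cast wd_triangle hgen (α (i₀ + 1)) (β j) v
        have s2 : (wd A (β j) (α (i₀ + 1)) : ℝ) ≤ δ := by
          rw [wd_symm]; exact hjd
        have s3 : (wd A (α (i₀ + 1)) w : ℝ) = 1 := by
          rw [wd_symm]; exact e7
        have e4' : (wd A 1 (β j) : ℝ) = (wd A v 1 : ℝ) - j := by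
          rw [wd_symm]; exact e4
        have e5' : (wd A (β j) v : ℝ) = j := by
          rw [wd_symm]; exact e5
        push_cast at *
        linarith
      · exact absurd ⟨j, hjn, hjd⟩ hnP
  -- combine
  have hgpuv : gp A 1 u v = ((wd A 1 u : ℝ) + (wd A v 1 : ℝ) - (wd A u v : ℝ)) / 2 := by
    unfold gp
    rw [wd_symm (1 : H) v]
  have hw1 : (wd A 1 w : ℝ) ≤ p + 2 * δ + 1 := by
    rw [hgpuv] at huv
    linarith
  -- w lies on the geodesic, so (u|v)_w = 0
  have hgpw : gp A 1 (w⁻¹ * u) (w⁻¹ * v) = 0 := by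
    rw [gp_left]
    have d1 : (wd A w u : ℝ) = i₀ := by
      rw [wd_symm]
      have := dist_geo hα (Nat.zero_le i₀) hi₀n
      rw [hα.1] at this
      simpa using this
    have d2 : (wd A w v : ℝ) = (wd A u v : ℝ) - i₀ := by
      have := dist_geo hα hi₀n le_rfl
      rw [hα.2.1] at this
      exact this
    unfold gp
    rw [d1, d2]
    ring
  have key := hq _ _ hgpw
  simp only [map_mul, map_inv] at key
  rw [gp_left] at key
  have base := gp_base hgen (φ w) (φ u) (φ v)
  have lip : wd A 1 (φ w) ≤ M * wd A 1 w := wd_phi_le hgen φ M hMbound w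
  have lipR : (wd A 1 (φ w) : ℝ) ≤ (M : ℝ) * (wd A 1 w : ℝ) := by exact_mod_cast lip
  have hmul : (M : ℝ) * (wd A 1 w : ℝ) ≤ (M : ℝ) * (p + 2 * δ + 1) :=
    mul_le_mul_of_nonneg_left hw1 (by positivity)
  linarith

end Paper
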